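/- Let F : ℝ → ℝ be integrable and continuously differentiable, let k(x) = e^(2ix)·( 1 + (1/2)·sech²(x/√2) + i·√2·tanh(x/√2) ), and let G(x) = (1/12)·Im( k(x)·∫_{-∞}^{x} conj(k(y))·F(y) dy + conj(k(x))·∫_{x}^{+∞} k(y)·F(y) dy ). If F is odd, then G is odd; moreover, if in addition F is a Schwartz function, then ∫_ℝ k(x)·F(x) dx = 0 if and only if ∫_ℝ Im(k(x))·F(x) dx = 0. -/

import Mathlib

open MeasureTheory

noncomputable def sech (x : ℝ) : ℝ := 1 / Real.cosh x

noncomputable def kJost (x : ℝ) : ℂ :=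
  Complex.exp (2 * Complex.I * (x : ℂ)) *
    (1 + ((1 / 2 * sech (x / Real.sqrt 2) ^ 2 : ℝ) : ℂ)
      + Complex.I * (Real.sqrt 2 : ℂ) * ((Real.tanh (x / Real.sqrt 2) : ℝ) : ℂ))

lemma kJost_neg (x : ℝ) : kJost (-x) = (starRingEnd ℂ) (kJost x) := by
  unfold kJost sech
  simp only [map_mul, map_add, map_one, map_ofNat, Complex.conj_ofReal, Complex.conj_I,
    ← Complex.exp_conj, neg_div, Real.cosh_neg, Real.tanh_neg, Complex.ofReal_neg]
  ring_nf

lemma kJost_cont : Continuous kJost := by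
  have h1 : Continuous Real.tanh := by
    have : Real.tanh = fun x => Real.sinh x / Real.cosh x := by
      funext x; exact Real.tanh_eq_sinh_div_cosh x
    rw [this]
    exact Real.continuous_sinh.div Real.continuous_cosh fun x => (Real.cosh_pos x).ne'
  unfold kJost sech
  have h2 : Continuous Real.cosh := Real.continuous_cosh
  fun_prop (disch := intros; positivity)

lemma kJost_bound (x : ℝ) : ‖kJost x‖ ≤ 3 := by
  have habs : ‖(Complex.exp (2 * Complex.I * (x : ℝ)))‖ = 1 := by
    rw [mul_comm, ← mul_assoc, Complex.norm_exp]
    simp [mul_comm]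
  unfold kJost
  have hsech : |sech (x / Real.sqrt 2)| ≤ 1 := by
    rw [sech, abs_div, abs_one, abs_of_pos (Real.cosh_pos _)]
    rw [div_le_one (Real.cosh_pos _)]
    exact Real.one_le_cosh _
  have htanh : |Real.tanh (x / Real.sqrt 2)| ≤ 1 := by
    rw [Real.tanh_eq_sinh_div_cosh, abs_div, abs_of_pos (Real.cosh_pos _),
      div_le_one (Real.cosh_pos _), Real.abs_sinh, ← Real.cosh_abs]
    exact (Real.sinh_lt_cosh _).le
  rw [norm_mul, habs, one_mul]
  calc ‖(1 : ℂ) + _ + _‖ ≤ ‖(1 : ℂ) + ((1 / 2 * sech (x / Real.sqrt 2) ^ 2 : ℝ) : ℂ)‖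
        + ‖Complex.I * (Real.sqrt 2 : ℂ) * ((Real.tanh (x / Real.sqrt 2) : ℝ) : ℂ)‖ :=
        norm_add_le _ _
    _ ≤ (‖(1:ℂ)‖ + ‖((1 / 2 * sech (x / Real.sqrt 2) ^ 2 : ℝ) : ℂ)‖) + ‖Complex.I * (Real.sqrt 2 : ℂ) * ((Real.tanh (x / Real.sqrt 2) : ℝ) : ℂ)‖ := by
        gcongr; exact norm_add_le _ _
    _ ≤ (1 + 1/2) + Real.sqrt 2 := by
        have h2 : Real.sqrt 2 ≥ 0 := Real.sqrt_nonneg 2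
        simp only [norm_mul, Complex.norm_I, Complex.norm_real, Real.norm_eq_abs, norm_one,
          one_mul]
        gcongr
        · show |1/2| * |sech (x / Real.sqrt 2) ^ 2| ≤ 1/2
          calc |1/2| * |sech (x / Real.sqrt 2) ^ 2| ≤ (1/2) * 1 := by
                rw [abs_pow]
                have : |sech (x / Real.sqrt 2)| ^ 2 ≤ 1 := by
                  nlinarith [abs_nonneg (sech (x / Real.sqrt 2))]
                simp [abs_of_pos]; nlinarith [abs_nonneg (sech (x / Real.sqrt 2))]
            _ = 1/2 := by norm_num
        · rw [abs_of_nonneg h2]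
          nlinarith [htanh]
    _ ≤ 3 := by nlinarith [Real.sq_sqrt (by norm_num : (2:ℝ) ≥ 0).le, Real.sqrt_nonneg 2,
          Real.sqrt_lt_sqrt (by norm_num : (0:ℝ) ≤ 2) (by norm_num : (2:ℝ) < 4)]

theorem odd_source_gives_odd_solution
    (F : ℝ → ℝ) (hF : Integrable F) (hF1 : ContDiff ℝ 1 F)
    (hFodd : ∀ x : ℝ, F (-x) = -F x)
    (G : ℝ → ℝ)
    (hG : ∀ x : ℝ, G x = (1 / 12) *
      (kJost x * (∫ y in Set.Iic x, (starRingEnd ℂ) (kJost y) * (F y : ℂ))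
        + (starRingEnd ℂ) (kJost x) * (∫ y in Set.Ici x, kJost y * (F y : ℂ))).im) :
    (∀ x : ℝ, G (-x) = -G x) ∧
    ((∃ S : SchwartzMap ℝ ℝ, ∀ x : ℝ, S x = F x) →
      ((∫ x : ℝ, kJost x * (F x : ℂ)) = 0 ↔ (∫ x : ℝ, (kJost x).im * F x) = 0)) := by
  constructor
  · intro x
    have h1 : (∫ y in Set.Iic (-x), (starRingEnd ℂ) (kJost y) * (F y : ℂ))
        = - ∫ y in Set.Ici x, kJost y * (F y : ℂ) := by
      rw [← integral_comp_neg_Ioi x (fun y => (starRingEnd ℂ) (kJost y) * (F y : ℂ))]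
      rw [MeasureTheory.integral_Ici_eq_integral_Ioi, ← integral_neg]
      congr 1; funext y
      rw [kJost_neg, Complex.conj_conj, hFodd]
      push_cast; ring
    have h2 : (∫ y in Set.Ici (-x), kJost y * (F y : ℂ))
        = - ∫ y in Set.Iic x, (starRingEnd ℂ) (kJost y) * (F y : ℂ) := by
      rw [MeasureTheory.integral_Ici_eq_integral_Ioi,
        ← integral_comp_neg_Iic x (fun y => kJost y * (F y : ℂ)),
        ← integral_neg]
      congr 1; funext y
      rw [kJost_neg, hFodd]
      push_cast; ring
    rw [hG, hG, h1, h2, kJost_neg, starRingEnd_self_apply]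
    have : (starRingEnd ℂ) (kJost x) * -(∫ y in Set.Ici x, kJost y * (F y : ℂ))
        + kJost x * -(∫ y in Set.Iic x, (starRingEnd ℂ) (kJost y) * (F y : ℂ))
        = -(kJost x * (∫ y in Set.Iic x, (starRingEnd ℂ) (kJost y) * (F y : ℂ))
          + (starRingEnd ℂ) (kJost x) * (∫ y in Set.Ici x, kJost y * (F y : ℂ))) := by ring
    rw [this, Complex.neg_im]
    ring
  · intro _
    have hint : Integrable (fun x => kJost x * (F x : ℂ)) := by
      exact hF.ofReal.bdd_mul kJost_cont.aestronglyMeasurable (c := 3) (Filter.Eventually.of_forall kJost_bound)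
    have hre : (∫ x : ℝ, (kJost x).re * F x) = 0 := by
      have hodd : ∀ x : ℝ, (kJost (-x)).re * F (-x) = -((kJost x).re * F x) := by
        intro x
        rw [kJost_neg, hFodd, Complex.conj_re]; ring
      have hcomp : (∫ x : ℝ, (kJost (-x)).re * F (-x)) = ∫ x : ℝ, (kJost x).re * F x :=
        (Measure.measurePreserving_neg volume).integral_comp
          (Homeomorph.neg ℝ).isClosedEmbedding.measurableEmbedding
          (fun x => (kJost x).re * F x)
      have h3 : (∫ x : ℝ, (kJost (-x)).re * F (-x)) = - ∫ x : ℝ, (kJost x).re * F x := by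
        simp_rw [hodd]
        exact integral_neg _
      linarith
    have hre' : (∫ x : ℝ, kJost x * (F x : ℂ)).re = 0 := by
      rw [← RCLike.re_to_complex, ← integral_re hint]
      simp only [RCLike.re_to_complex]
      simpa [Complex.mul_re] using hre
    have him' : (∫ x : ℝ, kJost x * (F x : ℂ)).im = ∫ x : ℝ, (kJost x).im * F x := by
      rw [← RCLike.im_to_complex, ← integral_im hint]
      simp only [RCLike.im_to_complex]
      congr 1; funext x
      simp [Complex.mul_im]
    constructor
    · intro h; rw [← him', h]; simp
    · intro h
      apply Complex.ext
      · rw [hre']; simp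
      · rw [him', h]; simp
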